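/- Let a ∈ L¹(γ) be supported in an admissible ball B with ∫ a dγ = 0 and ∫|a| dγ ≤ 1. Then |∫ a(y) dy| ≤ C·r_B·(1 + |c_B|)·γ₀(c_B)⁻¹, where the left integral is with respect to Lebesgue measure and γ₀ is the Gaussian density. -/
import Mathlib


open MeasureTheory
open scoped ENNReal

/-- Gaussian density `γ₀(x) = π^{-n/2} e^{-|x|²}` on ℝⁿ. -/
noncomputable def gaussDensity (n : ℕ) (x : EuclideanSpace ℝ (Fin n)) : ℝ :=
  Real.pi ^ (-(n : ℝ) / 2) * Real.exp (-‖x‖ ^ 2)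

/-- The Gauss measure `γ` on ℝⁿ. -/
noncomputable def gaussMeasure (n : ℕ) : Measure (EuclideanSpace ℝ (Fin n)) :=
  volume.withDensity fun x => ENNReal.ofReal (gaussDensity n x)

/-- `mrad t = min(1, 1/t)`, equal to `1` when `t ≤ 1`. -/
noncomputable def mrad (t : ℝ) : ℝ := if t ≤ 1 then 1 else 1 / t

lemma gaussDensity_pos (n : ℕ) (x : EuclideanSpace ℝ (Fin n)) : 0 < gaussDensity n x := by
  unfold gaussDensity
  positivity

lemma continuous_gaussDensity (n : ℕ) : Continuous (gaussDensity n) := by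
  unfold gaussDensity
  fun_prop

lemma integral_gauss (n : ℕ) (f : EuclideanSpace ℝ (Fin n) → ℝ) :
    ∫ x, f x ∂gaussMeasure n = ∫ x, gaussDensity n x * f x := by
  have hmeas : Measurable fun x => (gaussDensity n x).toNNReal :=
    (continuous_gaussDensity n).measurable.real_toNNReal
  have : gaussMeasure n
      = volume.withDensity fun x => ((gaussDensity n x).toNNReal : ℝ≥0∞) := rfl
  rw [this, integral_withDensity_eq_integral_smul hmeas]
  congr 1
  ext x
  rw [NNReal.smul_def, smul_eq_mul, Real.coe_toNNReal _ (gaussDensity_pos n x).le]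

lemma abs_exp_sub_one (d : ℝ) : |Real.exp d - 1| ≤ |d| * Real.exp |d| := by
  rcases le_or_gt 0 d with h | h
  · rw [abs_of_nonneg h, abs_of_nonneg (by nlinarith [Real.add_one_le_exp d] : (0:ℝ) ≤ Real.exp d - 1)]
    have h1 : (1 - d) * Real.exp d ≤ 1 := by
      have h2 := Real.add_one_le_exp (-d)
      have h3 : Real.exp (-d) * Real.exp d = 1 := by
        rw [← Real.exp_add]; simp
      nlinarith [Real.exp_pos d]
    nlinarith
  · rw [abs_of_neg h, abs_of_nonpos (by nlinarith [Real.exp_lt_one_iff.2 h] : Real.exp d - 1 ≤ 0)]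
    have h2 := Real.add_one_le_exp d
    have h3 := Real.one_le_exp (by linarith : (0:ℝ) ≤ -d)
    nlinarith

lemma density_inv_diff_le (n : ℕ) (cB x : EuclideanSpace ℝ (Fin n)) (rB : ℝ)
    (hr : 0 < rB) (hr1 : rB ≤ 1) (hrc : rB * ‖cB‖ ≤ 1)
    (hx : x ∈ Metric.closedBall cB rB) :
    |(gaussDensity n x)⁻¹ - (gaussDensity n cB)⁻¹|
      ≤ (2 * Real.exp 3) * rB * (1 + ‖cB‖) * (gaussDensity n cB)⁻¹ := by
  have hc : (0:ℝ) ≤ ‖cB‖ := norm_nonneg _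
  have hxn : ‖x‖ ≤ ‖cB‖ + rB := by
    have := mem_closedBall_iff_norm.1 hx
    calc ‖x‖ = ‖x - cB + cB‖ := by rw [sub_add_cancel]
      _ ≤ ‖x - cB‖ + ‖cB‖ := norm_add_le _ _
      _ ≤ ‖cB‖ + rB := by linarith
  have hxn' : ‖cB‖ - rB ≤ ‖x‖ := by
    have := mem_closedBall_iff_norm.1 hx
    have h2 : ‖cB‖ ≤ ‖x‖ + ‖cB - x‖ := by
      calc ‖cB‖ = ‖x + (cB - x)‖ := by rw [add_sub_cancel]
        _ ≤ ‖x‖ + ‖cB - x‖ := norm_add_le _ _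
    rw [norm_sub_rev] at h2
    linarith
  set d : ℝ := ‖x‖ ^ 2 - ‖cB‖ ^ 2 with hd
  have hxnn : (0:ℝ) ≤ ‖x‖ := norm_nonneg _
  have hdub : |d| ≤ 2 * rB * (1 + ‖cB‖) := by
    rw [abs_le]
    constructor <;> nlinarith
  have hd3 : |d| ≤ 3 := by
    rw [abs_le]
    constructor <;> nlinarith
  have hDcpos := gaussDensity_pos n cB
  have hkey : (gaussDensity n x)⁻¹ - (gaussDensity n cB)⁻¹
      = (Real.exp d - 1) * (gaussDensity n cB)⁻¹ := by
    have hDx : gaussDensity n x = gaussDensity n cB * Real.exp (-d) := by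
      unfold gaussDensity
      rw [mul_assoc, ← Real.exp_add]
      congr 2
      ring
    rw [hDx, mul_inv, Real.exp_neg, inv_inv]
    ring
  rw [hkey, abs_mul, abs_of_nonneg (inv_nonneg.2 hDcpos.le)]
  have hstep : |Real.exp d - 1| ≤ (2 * Real.exp 3) * rB * (1 + ‖cB‖) := by
    calc |Real.exp d - 1| ≤ |d| * Real.exp |d| := abs_exp_sub_one d
      _ ≤ (2 * rB * (1 + ‖cB‖)) * Real.exp 3 := by
          apply mul_le_mul hdub (Real.exp_le_exp.2 hd3) (Real.exp_pos _).le
          positivity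
      _ = (2 * Real.exp 3) * rB * (1 + ‖cB‖) := by ring
  exact mul_le_mul_of_nonneg_right hstep (inv_nonneg.2 hDcpos.le)

theorem stmt_7 (n : ℕ) :
    ∃ C > 0, ∀ (cB : EuclideanSpace ℝ (Fin n)) (rB : ℝ)
      (a : EuclideanSpace ℝ (Fin n) → ℝ),
      0 < rB → rB ≤ mrad ‖cB‖ →
      Function.support a ⊆ Metric.closedBall cB rB →
      Integrable a (gaussMeasure n) →
      (∫ x, a x ∂gaussMeasure n) = 0 →
      (∫ x, |a x| ∂gaussMeasure n) ≤ 1 →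
      |∫ x, a x| ≤ C * rB * (1 + ‖cB‖) * (gaussDensity n cB)⁻¹ := by
  refine ⟨2 * Real.exp 3, by positivity, ?_⟩
  intro cB rB a hr hmr hsupp hint hzero hone
  set D := gaussDensity n with hD
  have hc : (0:ℝ) ≤ ‖cB‖ := norm_nonneg _
  -- basic radius facts
  have hr1 : rB ≤ 1 := by
    unfold mrad at hmr
    split_ifs at hmr with h
    · exact hmr
    · have h1 : (1:ℝ) < ‖cB‖ := not_le.1 h
      calc rB ≤ 1 / ‖cB‖ := hmr
        _ ≤ 1 := by rw [div_le_one (by linarith)]; linarith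
  have hrc : rB * ‖cB‖ ≤ 1 := by
    unfold mrad at hmr
    split_ifs at hmr with h
    · nlinarith
    · have h1 : (1:ℝ) < ‖cB‖ := not_le.1 h
      rw [div_eq_mul_inv, one_mul] at hmr
      calc rB * ‖cB‖ ≤ ‖cB‖⁻¹ * ‖cB‖ := by nlinarith
        _ = 1 := inv_mul_cancel₀ (by positivity)
  set M : ℝ := 2 * Real.exp 3 * rB * (1 + ‖cB‖) * (D cB)⁻¹ with hM
  have hDcpos := gaussDensity_pos n cB
  have hMnn : 0 ≤ M := by positivity
  -- pointwise bound on g = a * (D⁻¹ - D cB ⁻¹)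
  set g : EuclideanSpace ℝ (Fin n) → ℝ := fun x => a x * ((D x)⁻¹ - (D cB)⁻¹) with hg
  have hbd : ∀ x, |g x| ≤ M * |a x| := by
    intro x
    rcases eq_or_ne (a x) 0 with h0 | h0
    · simp [hg, h0]
    · have hxB : x ∈ Metric.closedBall cB rB := hsupp h0
      rw [hg]
      simp only
      rw [abs_mul, mul_comm M]
      exact mul_le_mul_of_nonneg_left
        (density_inv_diff_le n cB x rB hr hr1 hrc hxB) (abs_nonneg _)
  -- integrability of g w.r.t. gaussMeasure
  have hMa_int : Integrable (fun x => M * |a x|) (gaussMeasure n) := (hint.abs.const_mul M)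
  have hg_meas : AEStronglyMeasurable g (gaussMeasure n) := by
    apply hint.aestronglyMeasurable.mul
    exact (((continuous_gaussDensity n).inv₀ (fun x => (gaussDensity_pos n x).ne')).sub
      continuous_const).aestronglyMeasurable
  have hg_int : Integrable g (gaussMeasure n) :=
    hMa_int.mono' hg_meas (Filter.Eventually.of_forall fun x => by
      rw [Real.norm_eq_abs]; exact hbd x)
  -- the Lebesgue integral of a equals ∫ a * D⁻¹ dγ
  have hvol : ∫ x, a x = ∫ x, a x * (D x)⁻¹ ∂gaussMeasure n := by
    rw [integral_gauss]
    congr 1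
    ext x
    rw [← mul_assoc, mul_comm (D x) (a x), mul_assoc,
      mul_inv_cancel₀ (gaussDensity_pos n x).ne', mul_one]
  have hsplit : ∫ x, a x * (D x)⁻¹ ∂gaussMeasure n
      = ∫ x, g x ∂gaussMeasure n := by
    have h1 : (fun x => a x * (D x)⁻¹) = fun x => g x + a x * (D cB)⁻¹ := by
      ext x; simp only [hg]; ring
    rw [h1, integral_add hg_int (hint.mul_const _), integral_mul_const, hzero,
      zero_mul, add_zero]
  rw [hvol, hsplit]
  calc |∫ x, g x ∂gaussMeasure n| ≤ ∫ x, M * |a x| ∂gaussMeasure n := by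
        rw [← Real.norm_eq_abs]
        exact norm_integral_le_of_norm_le hMa_int (Filter.Eventually.of_forall fun x => by
          rw [Real.norm_eq_abs]; exact hbd x)
    _ = M * ∫ x, |a x| ∂gaussMeasure n := integral_const_mul M _
    _ ≤ M * 1 := by exact mul_le_mul_of_nonneg_left hone hMnn
    _ = 2 * Real.exp 3 * rB * (1 + ‖cB‖) * (gaussDensity n cB)⁻¹ := by rw [mul_one]
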